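/- Let Γ be a group, G = ℤ ≀ Γ, N = ⊕_Γ ℤ. Let Λ ≤ Γ be a subgroup, and assume x ∈ N satisfies: e_Γ ∈ supp(x), and for every subset S ⊆ supp(x) with e_Γ ∈ S and Σ_{s∈S} x(s) = 0, the subgroup generated by S contains Λ. Then cl_{G,N}(x) ≥ intrk^Γ(Λ), where intrk^Γ(Λ) = inf{rk(Θ) : Λ ≤ Θ ≤ Γ} (with the convention cl_{G,N}(x) = ∞ if x ∉ [G,N]). -/

import Mathlib

open Finsupp
open scoped commutatorElement

variable (A : Type*) [AddCommGroup A] (Γ : Type*) [Group Γ]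

/-- The shift action of `Γ` on `⊕_Γ A`: `(γ • u) x = u (γ⁻¹ * x)`. -/
noncomputable def shiftHom : Γ →* Multiplicative (AddAut (Γ →₀ A)) where
  toFun γ := Multiplicative.ofAdd (Finsupp.domCongr (Equiv.mulLeft γ) : (Γ →₀ A) ≃+ (Γ →₀ A))
  map_one' := by
    apply Multiplicative.toAdd.injective; apply AddEquiv.ext; intro f; ext a
    simp [Finsupp.domCongr_apply, Finsupp.equivMapDomain_apply]
    rfl
  map_mul' γ γ' := by
    apply Multiplicative.toAdd.injective; apply AddEquiv.ext; intro f; ext a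
    simp [AddAut.add_apply, Finsupp.domCongr_apply, Finsupp.equivMapDomain_apply, Equiv.Perm.mul_apply, mul_assoc]
    rfl

/-- The action of `Γ` on `Multiplicative (⊕_Γ A)` used to build the wreath product. -/
noncomputable def wreathφ : Γ →* MulAut (Multiplicative (Γ →₀ A)) where
  toFun γ := AddEquiv.toMultiplicative (shiftHom A Γ γ).toAdd
  map_one' := by ext x; simp
  map_mul' γ γ' := by ext x; simp

/-- The restricted wreath product `A ≀ Γ = (⊕_Γ A) ⋊ Γ`. -/
noncomputable abbrev Wreath := SemidirectProduct (Multiplicative (Γ →₀ A)) Γ (wreathφ A Γ)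

/-- The mixed commutator length `cl_{G,N}` (∞ if not a product of mixed commutators). -/
noncomputable def clGN {G : Type*} [Group G] (N : Subgroup G) (x : G) : ℕ∞ :=
  sInf {n : ℕ∞ | ∃ k : ℕ, n = k ∧ ∃ g v : Fin k → G, (∀ i, v i ∈ N) ∧
    x = (List.ofFn fun i => ⁅g i, v i⁆).prod}

/-- The rank of a subgroup: minimal size of a generating set. -/
noncomputable def rk {G : Type*} [Group G] (H : Subgroup G) : ℕ∞ :=
  sInf {n : ℕ∞ | ∃ S : Finset G, Subgroup.closure (S : Set G) = H ∧ n = S.card}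

/-- The intermediate rank `intrk^Γ(Λ) = inf {rk Θ | Λ ≤ Θ ≤ Γ}`. -/
noncomputable def intrk {G : Type*} [Group G] (Λ : Subgroup G) : ℕ∞ :=
  sInf {n : ℕ∞ | ∃ Θ : Subgroup G, Λ ≤ Θ ∧ n = rk Θ}

/-- The general rank in the sense of Malcev. -/
noncomputable def genrk (G : Type*) [Group G] : ℕ∞ :=
  sSup {n : ℕ∞ | ∃ Λ : Subgroup G, Λ.FG ∧ n = intrk Λ}

/-- The special rank in the sense of Malcev. -/
noncomputable def sperk (G : Type*) [Group G] : ℕ∞ :=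
  sSup {n : ℕ∞ | ∃ Λ : Subgroup G, Λ.FG ∧ n = rk Λ}

open SemidirectProduct in
lemma comm_inl_aux {N G : Type*} [CommGroup N] [Group G] {φ : G →* MulAut N}
    (p : N ⋊[φ] G) (w : N) :
    ⁅p, (inl w : N ⋊[φ] G)⁆ = inl (φ p.right w * w⁻¹) := by
  ext
  · simp [commutatorElement_def, mul_assoc, mul_comm, mul_left_comm]
    rw [mul_left_comm, mul_inv_cancel_left]
  · simp [commutatorElement_def]

lemma cosetSum_shift {Γ : Type*} [Group Γ] (Θ : Subgroup Γ) [DecidablePred (· ∈ Θ)]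
    (γ0 : Γ) (hγ0 : γ0 ∈ Θ) (u : Γ →₀ ℤ) :
    Finsupp.liftAddHom (fun a => if a ∈ Θ then AddMonoidHom.id ℤ else 0) ((shiftHom ℤ Γ γ0).toAdd u)
    = Finsupp.liftAddHom (fun a => if a ∈ Θ then AddMonoidHom.id ℤ else 0) u := by
  rw [Finsupp.liftAddHom_apply, Finsupp.liftAddHom_apply]
  show (Finsupp.equivMapDomain (Equiv.mulLeft γ0) u).sum _ = _
  rw [Finsupp.sum_equivMapDomain]
  refine Finsupp.sum_congr fun a _ => ?_
  simp only [Equiv.coe_mulLeft, Subgroup.mul_mem_cancel_left _ hγ0]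

/-- lower bound for the mixed commutator length in `ℤ ≀ Γ`
in terms of the intermediate rank. -/
theorem intrk_le_clGN {Γ : Type*} [Group Γ] (Λ : Subgroup Γ) (x : Γ →₀ ℤ)
    (h1 : (1 : Γ) ∈ x.support)
    (hzs : ∀ S : Finset Γ, (S : Set Γ) ⊆ (x.support : Set Γ) → (1 : Γ) ∈ S →
      (∑ s ∈ S, x s = 0) → Λ ≤ Subgroup.closure (S : Set Γ)) :
    intrk Λ ≤ clGN (SemidirectProduct.inl : Multiplicative (Γ →₀ ℤ) →* Wreath ℤ Γ).range
      (SemidirectProduct.inl (Multiplicative.ofAdd x)) := by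
  classical
  refine le_sInf ?_
  rintro n ⟨k, rfl, g, v, hv, hx⟩
  simp only [MonoidHom.mem_range] at hv
  choose w hw using hv
  set T : Finset Γ := Finset.image (fun i => (g i).right) Finset.univ with hT
  set Θ : Subgroup Γ := Subgroup.closure (T : Set Γ) with hΘ
  set F : (Γ →₀ ℤ) →+ ℤ :=
    Finsupp.liftAddHom (fun a => if a ∈ Θ then AddMonoidHom.id ℤ else 0) with hF
  -- rewrite commutators
  have hcomm : ∀ i, ⁅g i, v i⁆ = SemidirectProduct.inl
      ((wreathφ ℤ Γ (g i).right) (w i) * (w i)⁻¹) := by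
    intro i
    rw [← hw i, comm_inl_aux]
  have hx' : Multiplicative.ofAdd x =
      (List.ofFn fun i => (wreathφ ℤ Γ (g i).right) (w i) * (w i)⁻¹).prod := by
    apply SemidirectProduct.inl_injective (φ := wreathφ ℤ Γ)
    rw [hx, map_list_prod, List.map_ofFn]
    exact congrArg List.prod (congrArg List.ofFn (funext fun i => hcomm i))
  -- apply F
  have hFc : ∀ i, F ((wreathφ ℤ Γ (g i).right) (w i) * (w i)⁻¹).toAdd = 0 := by
    intro i
    have hmem : (g i).right ∈ Θ :=
      Subgroup.subset_closure (Finset.mem_coe.mpr (Finset.mem_image_of_mem _ (Finset.mem_univ i)))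
    have : ((wreathφ ℤ Γ (g i).right) (w i)).toAdd = (shiftHom ℤ Γ (g i).right).toAdd (w i).toAdd := rfl
    rw [toAdd_mul, toAdd_inv, map_add, map_neg, this, hF, cosetSum_shift Θ _ hmem,
      add_neg_cancel]
  have hFx : F x = 0 := by
    set FM := AddMonoidHom.toMultiplicative F with hFM
    have h2 := congrArg FM hx'
    rw [map_list_prod, List.map_ofFn] at h2
    have h3 : (List.ofFn (FM ∘ fun i => (wreathφ ℤ Γ (g i).right) (w i) * (w i)⁻¹)).prod = 1 := by
      apply List.prod_eq_one
      intro a ha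
      rw [List.mem_ofFn] at ha
      obtain ⟨i, rfl⟩ := ha
      show Multiplicative.ofAdd (F (Multiplicative.toAdd _)) = 1
      rw [hFc i]
      rfl
    rw [h3] at h2
    have h4 : Multiplicative.ofAdd (F x) = 1 := h2
    exact ofAdd_eq_one.mp h4
  -- define S
  set S : Finset Γ := x.support.filter (· ∈ Θ) with hS
  have hSsub : (S : Set Γ) ⊆ (x.support : Set Γ) := by
    intro a ha
    simp only [hS, Finset.coe_filter, Set.mem_setOf_eq] at ha
    exact ha.1
  have h1S : (1 : Γ) ∈ S := Finset.mem_filter.mpr ⟨h1, Θ.one_mem⟩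
  have hFalt : F x = ∑ a ∈ x.support, if a ∈ Θ then x a else 0 := by
    rw [hF, Finsupp.liftAddHom_apply, Finsupp.sum]
    refine Finset.sum_congr rfl fun a _ => ?_
    split <;> simp
  have hsum : ∑ s ∈ S, x s = 0 := by
    rw [hS, Finset.sum_filter, ← hFalt]
    exact hFx
  have hΛΘ : Λ ≤ Θ := (hzs S hSsub h1S hsum).trans ((Subgroup.closure_le Θ).mpr (by
    intro a ha
    simp only [hS, Finset.coe_filter, Set.mem_setOf_eq] at ha
    exact ha.2))
  have h_int : intrk Λ ≤ rk Θ := sInf_le ⟨Θ, hΛΘ, rfl⟩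
  have h_rk : rk Θ ≤ (T.card : ℕ∞) := sInf_le ⟨T, hΘ.symm, rfl⟩
  have h_card : (T.card : ℕ∞) ≤ (k : ℕ∞) := by
    exact_mod_cast Finset.card_image_le.trans
      (le_of_eq (Finset.card_univ.trans (Fintype.card_fin k)))
  exact h_int.trans (h_rk.trans h_card)
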